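/- Let k be a field of characteristic p and (a_1,...,a_n) ∈ k^n. Then the Moore determinant satisfies the product formula Δ_n(a) = ∏_{i=1}^n ∏_{(ε_1,...,ε_{i-1}) ∈ F_p^{i-1}} (a_i + ε_{i-1}a_{i-1} + ... + ε_1 a_1). -/

import Mathlib

/-- The Moore matrix of an `n`-tuple `a` in a ring of characteristic `p`:
its `(i,j)` entry is `a j ^ p ^ i`. -/
def mooreMatrix {k : Type*} [CommRing k] (p : ℕ) {n : ℕ} (a : Fin n → k) :
    Matrix (Fin n) (Fin n) k :=
  Matrix.of fun i j => a j ^ p ^ (i : ℕ)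

section MooreAux

open Polynomial Matrix Finset

variable {k : Type*} [Field k] (p : ℕ) [Fact p.Prime] [CharP k p]

private lemma moore_sum_pow {n : ℕ} (ε : Fin n → ZMod p) (b : Fin n → k) (i : ℕ) :
    (∑ j, ZMod.castHom (dvd_refl p) k (ε j) * b j) ^ p ^ i
      = ∑ j, ZMod.castHom (dvd_refl p) k (ε j) * b j ^ p ^ i := by
  haveI : ExpChar k p := ExpChar.prime (Fact.out : p.Prime)
  rw [← iterateFrobenius_def (R := k) (p := p) (n := i), map_sum]
  refine Finset.sum_congr rfl fun j _ => ?_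
  rw [RingHom.map_mul, iterateFrobenius_def, iterateFrobenius_def, ← RingHom.map_pow, ZMod.pow_card_pow]

private lemma moore_det_eq_zero {n : ℕ} {b : Fin n → k} {ε : Fin n → ZMod p} (hε : ε ≠ 0)
    (h : ∑ j, ZMod.castHom (dvd_refl p) k (ε j) * b j = 0) :
    (mooreMatrix p b).det = 0 := by
  rw [← Matrix.exists_mulVec_eq_zero_iff]
  refine ⟨fun j => ZMod.castHom (dvd_refl p) k (ε j), ?_, ?_⟩
  · intro h0
    apply hε
    funext j
    have := congrFun h0 j
    exact (_root_.map_eq_zero (ZMod.castHom (dvd_refl p) k)).mp this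
  · funext i
    have := moore_sum_pow p ε b (i : ℕ)
    rw [h, zero_pow (pow_ne_zero _ (Fact.out : p.Prime).ne_zero)] at this
    simp only [Matrix.mulVec, dotProduct, mooreMatrix, Matrix.of_apply, Pi.zero_apply]
    rw [show (∑ x : Fin n, b x ^ p ^ (i : ℕ) * ZMod.castHom (dvd_refl p) k (ε x))
        = ∑ x : Fin n, ZMod.castHom (dvd_refl p) k (ε x) * b x ^ p ^ (i : ℕ) from
      Finset.sum_congr rfl fun j _ => mul_comm _ _]
    exact this.symm

private lemma moore_det_snoc {n : ℕ} (b : Fin n → k) (c : k) :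
    (mooreMatrix p (Fin.snoc b c)).det
      = (mooreMatrix p b).det * ∏ ε : Fin n → ZMod p,
          (c + ∑ j, ZMod.castHom (dvd_refl p) k (ε j) * b j) := by
  classical
  set φ := ZMod.castHom (dvd_refl p) k with hφ
  set v : (Fin n → ZMod p) → k := fun ε => ∑ j, φ (ε j) * b j with hv
  haveI : Fact (1 < p) := ⟨(Fact.out : p.Prime).one_lt⟩
  by_cases hdep : ∃ ε ≠ 0, v ε = 0
  · obtain ⟨ε, hε, hveps⟩ := hdep
    have hb : (mooreMatrix p b).det = 0 := moore_det_eq_zero p hε hveps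
    rw [hb, zero_mul]
    refine moore_det_eq_zero p (ε := Fin.snoc ε 0) ?_ ?_
    · intro h0
      apply hε
      funext j
      have := congrFun h0 j.castSucc
      simpa using this
    · rw [Fin.sum_univ_castSucc]
      simpa [hv, hφ] using hveps
  · push_neg at hdep
    have hindep : ∀ ε, v ε = 0 → ε = 0 := by
      intro ε hε
      by_contra hne
      exact hdep ε hne hε
    -- the polynomial P
    set P : k[X] := (mooreMatrix p (Fin.snoc (fun j => (C (b j) : k[X])) X)).det with hP
    have heval : ∀ x : k, P.eval x = (mooreMatrix p (Fin.snoc b x)).det := by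
      intro x
      have := RingHom.map_det (evalRingHom x) (mooreMatrix p (Fin.snoc (fun j => (C (b j) : k[X])) X))
      rw [hP]
      rw [show Polynomial.eval x = ⇑(evalRingHom x) from rfl, this]
      congr 1
      ext i j
      simp only [RingHom.mapMatrix_apply, Matrix.map_apply, mooreMatrix, Matrix.of_apply, map_pow]
      congr 1
      cases j using Fin.lastCases with
      | last => simp
      | cast j => simp
    set d : k := (mooreMatrix p b).det with hd
    -- expansion of P
    set Bmat : Fin (n + 1) → Matrix (Fin n) (Fin n) k :=
      fun i => Matrix.of fun i' j' => b j' ^ p ^ ((i.succAbove i' : Fin (n + 1)) : ℕ) with hB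
    have hPexp : P = ∑ i : Fin (n + 1), C ((-1) ^ ((i : ℕ) + n) * (Bmat i).det) * X ^ p ^ (i : ℕ) := by
      rw [hP, Matrix.det_succ_column _ (Fin.last n)]
      refine Finset.sum_congr rfl fun i _ => ?_
      have hsub : (mooreMatrix p (Fin.snoc (fun j => (C (b j) : k[X])) X)).submatrix
          i.succAbove (Fin.last n).succAbove = (Bmat i).map C := by
        ext i' j'
        simp only [Matrix.submatrix_apply, mooreMatrix, Matrix.of_apply, Matrix.map_apply,
          Fin.succAbove_last, Fin.snoc_castSucc, hB, map_pow]
      rw [hsub, show ((Bmat i).map ⇑C) = (C : k →+* k[X]).mapMatrix (Bmat i) from rfl,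
        ← RingHom.map_det]
      simp only [mooreMatrix, Matrix.of_apply, Fin.snoc_last, Fin.val_last, _root_.map_mul,
        _root_.map_pow, _root_.map_neg, _root_.map_one]
      ring
    have hcoeffP : P.coeff (p ^ n) = d := by
      rw [hPexp, finset_sum_coeff]
      rw [Finset.sum_eq_single (Fin.last n)]
      · have hBl : Bmat (Fin.last n) = mooreMatrix p b := by
          ext i' j'
          simp [hB, mooreMatrix, Fin.succAbove_last]
        have hev : Even (n + n) := ⟨n, rfl⟩
        simp [coeff_C_mul, coeff_X_pow, hBl, ← hd, hev.neg_one_pow]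
      · intro i _ hi
        simp only [coeff_C_mul, coeff_X_pow]
        rw [if_neg, mul_zero]
        intro hpow
        have hni : n = (i : ℕ) :=
          Nat.pow_right_injective (Fact.out : p.Prime).two_le hpow
        exact hi (Fin.ext (by rw [Fin.val_last]; exact hni.symm))
      · intro h; exact absurd (Finset.mem_univ _) h
    have hdegP : P.natDegree ≤ p ^ n := by
      rw [hPexp]
      refine (natDegree_sum_le _ _).trans ?_
      rw [Finset.fold_max_le]
      constructor
      · exact Nat.zero_le _
      · intro i _
        refine (natDegree_C_mul_le _ _).trans ?_
        rw [natDegree_X_pow]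
        exact Nat.pow_le_pow_right (Fact.out : p.Prime).pos (Nat.le_of_lt_succ i.isLt)
    -- the polynomial Q
    set M : k[X] := ∏ ε : Fin n → ZMod p, (X - C (v ε)) with hM
    have hMmonic : M.Monic := monic_prod_of_monic _ _ fun _ _ => monic_X_sub_C _
    have hcard : Fintype.card (Fin n → ZMod p) = p ^ n := by
      rw [Fintype.card_fun, ZMod.card, Fintype.card_fin]
    have hMdeg : M.natDegree = p ^ n := by
      rw [hM, natDegree_prod_of_monic _ _ fun _ _ => monic_X_sub_C _]
      simp [hcard, Finset.card_univ]
    set Q : k[X] := C d * M with hQ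
    have hcoeffQ : Q.coeff (p ^ n) = d := by
      rw [hQ, coeff_C_mul, ← hMdeg, hMmonic.coeff_natDegree, mul_one]
    have hdegQ : Q.natDegree ≤ p ^ n := by
      refine (natDegree_mul_le).trans ?_
      rw [natDegree_C, hMdeg, zero_add]
    -- injectivity of v
    have hvinj : Function.Injective v := by
      intro ε ε' hee
      have hsub : v (ε - ε') = 0 := by
        rw [hv]
        simp only [Pi.sub_apply, map_sub, sub_mul]
        rw [Finset.sum_sub_distrib]
        rw [show (∑ j, φ (ε j) * b j) = v ε from rfl, show (∑ j, φ (ε' j) * b j) = v ε' from rfl,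
          hee, sub_self]
      have := hindep _ hsub
      exact sub_eq_zero.mp (by funext j; exact congrFun this j)
    -- roots of P
    have hPeval : ∀ ε : Fin n → ZMod p, P.eval (v ε) = 0 := by
      intro ε
      rw [heval]
      refine moore_det_eq_zero p (ε := Fin.snoc ε (-1)) ?_ ?_
      · intro h0
        have := congrFun h0 (Fin.last n)
        simp only [Fin.snoc_last, Pi.zero_apply] at this
        exact one_ne_zero (neg_eq_zero.mp this)
      · rw [Fin.sum_univ_castSucc]
        simp only [Fin.snoc_castSucc, Fin.snoc_last, _root_.map_neg, _root_.map_one,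
          neg_mul, one_mul]
        have hsum : (∑ j : Fin n, φ (ε j) * b j) = v ε := rfl
        rw [hsum]
        ring
    have hQeval : ∀ ε : Fin n → ZMod p, Q.eval (v ε) = 0 := by
      intro ε
      rw [hQ, eval_mul, hM, eval_prod]
      rw [Finset.prod_eq_zero (Finset.mem_univ ε) (by simp), mul_zero]
    -- P = Q
    have hPQ : P = Q := by
      rcases eq_or_ne (P - Q) 0 with h0 | h0
      · exact sub_eq_zero.mp h0
      exfalso
      apply h0
      refine Polynomial.eq_zero_of_natDegree_lt_card_of_eval_eq_zero _ hvinj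
        (fun ε => by rw [eval_sub, hPeval, hQeval, sub_self]) ?_
      rw [hcard]
      refine lt_of_le_of_ne ((natDegree_sub_le _ _).trans (max_le hdegP hdegQ)) ?_
      intro hdeg
      have hlc := Polynomial.leadingCoeff_ne_zero.mpr h0
      rw [Polynomial.leadingCoeff, hdeg, coeff_sub, hcoeffP, hcoeffQ, sub_self] at hlc
      exact hlc rfl
    -- conclude by evaluating at c
    have := heval c
    rw [hPQ, hQ, eval_mul, eval_C, hM, eval_prod] at this
    rw [← this]
    congr 1
    refine Fintype.prod_equiv (Equiv.neg (Fin n → ZMod p)) _ _ fun ε => ?_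
    simp only [eval_sub, eval_X, eval_C, Equiv.neg_apply]
    have h3 : v (-ε) = -v ε := by
      show (∑ j : Fin n, φ ((-ε) j) * b j) = -∑ j : Fin n, φ (ε j) * b j
      rw [← Finset.sum_neg_distrib]
      exact Finset.sum_congr rfl fun j _ => by rw [Pi.neg_apply, _root_.map_neg, neg_mul]
    rw [show (∑ x : Fin n, φ ((-ε) x) * b x) = v (-ε) from rfl, h3]
    exact (sub_eq_add_neg _ _)

end MooreAux

/-- Moore's product formula:
`Δ_n(a) = ∏_{i=1}^n ∏_{(ε_1,…,ε_{i-1}) ∈ 𝔽_p^{i-1}} (a_i + ε_{i-1}a_{i-1} + ⋯ + ε_1 a_1)`. -/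
theorem moore_product_formula
    {k : Type*} [Field k] (p : ℕ) [Fact p.Prime] [CharP k p]
    {n : ℕ} (a : Fin n → k) :
    (mooreMatrix p a).det =
      ∏ i : Fin n, ∏ ε : Fin (i : ℕ) → ZMod p,
        (a i + ∑ j : Fin (i : ℕ),
          ZMod.castHom (dvd_refl p) k (ε j) * a (Fin.castLE i.isLt.le j)) := by
  induction n with
  | zero => simp [mooreMatrix]
  | succ n ih =>
    set b : Fin n → k := fun i => a i.castSucc with hb
    set c : k := a (Fin.last n) with hc
    have hsnoc : a = Fin.snoc b c := by
      funext i
      cases i using Fin.lastCases with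
      | last => simp [hb, hc]
      | cast i => simp [hb, hc]
    rw [Fin.prod_univ_castSucc]
    have h1 : (mooreMatrix p a).det = (mooreMatrix p (Fin.snoc b c)).det := by rw [← hsnoc]
    rw [h1, moore_det_snoc p b c, ih b]
    congr 1
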